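/- Let C1 and C2 be two catenaries hanging from the same suspension points A = (xA, hA), B = (xB, hB), xA < xB, with C1(x) > C2(x) for all x ∈ (xA, xB). Then the arc length of C1 over [xA, xB] is strictly less than the arc length of C2. -/

import Mathlib

set_option maxHeartbeats 1000000

lemma aux_catkey (p t : ℝ) : 1 + p * Real.sinh t ≤ Real.sqrt (1 + p ^ 2) * Real.cosh t := by
  have hc := Real.cosh_pos t
  have hq : (0:ℝ) ≤ Real.sqrt (1 + p ^ 2) := Real.sqrt_nonneg _
  have hq2 : Real.sqrt (1 + p ^ 2) ^ 2 = 1 + p ^ 2 := Real.sq_sqrt (by positivity)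
  have hc2 : Real.cosh t ^ 2 = Real.sinh t ^ 2 + 1 := Real.cosh_sq t
  nlinarith [sq_nonneg (p - Real.sinh t), mul_nonneg hq hc.le,
    sq_nonneg (Real.sqrt (1 + p ^ 2) * Real.cosh t - (1 + p * Real.sinh t))]

lemma aux_cat_deriv (a x0 y0 : ℝ) (ha : 0 < a) (C : ℝ → ℝ)
    (hC : ∀ x, C x = a * Real.cosh ((x - x0) / a) + y0) (x : ℝ) :
    HasDerivAt C (Real.sinh ((x - x0) / a)) x := by
  have hCe : C = fun x => a * Real.cosh ((x - x0) / a) + y0 := funext hC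
  rw [hCe]
  have ht : HasDerivAt (fun x : ℝ => (x - x0) / a) (1 / a) x := by
    simpa using ((hasDerivAt_id x).sub_const x0).div_const a
  have := ((ht.cosh).const_mul a).add_const y0
  refine this.congr_deriv ?_
  rw [mul_comm, mul_assoc, one_div_mul_cancel ha.ne', mul_one]

theorem higher_catenary_shorter_length
    (a1 x01 y01 a2 x02 y02 xA xB hA hB : ℝ)
    (ha1 : 0 < a1) (ha2 : 0 < a2) (hx : xA < xB)
    (C1 C2 : ℝ → ℝ)
    (hC1 : ∀ x, C1 x = a1 * Real.cosh ((x - x01) / a1) + y01)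
    (hC2 : ∀ x, C2 x = a2 * Real.cosh ((x - x02) / a2) + y02)
    (hA1 : C1 xA = hA) (hA2 : C2 xA = hA)
    (hB1 : C1 xB = hB) (hB2 : C2 xB = hB)
    (hgt : ∀ x ∈ Set.Ioo xA xB, C2 x < C1 x) :
    (∫ x in xA..xB, Real.sqrt (1 + deriv C1 x ^ 2)) <
      ∫ x in xA..xB, Real.sqrt (1 + deriv C2 x ^ 2) := by
  set s : ℝ → ℝ := fun x => Real.sinh ((x - x01) / a1) with hs
  set c : ℝ → ℝ := fun x => Real.cosh ((x - x01) / a1) with hc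
  set s2 : ℝ → ℝ := fun x => Real.sinh ((x - x02) / a2) with hs2
  have hd1 : ∀ x, HasDerivAt C1 (s x) x := aux_cat_deriv a1 x01 y01 ha1 C1 hC1
  have hd2 : ∀ x, HasDerivAt C2 (s2 x) x := aux_cat_deriv a2 x02 y02 ha2 C2 hC2
  have hcpos : ∀ x, 0 < c x := fun x => Real.cosh_pos _
  -- continuity
  have hconts : Continuous s := (Real.continuous_sinh.comp (by continuity))
  have hconts2 : Continuous s2 := (Real.continuous_sinh.comp (by continuity))
  have hcontc : Continuous c := (Real.continuous_cosh.comp (by continuity))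
  have hcontC1 : Continuous C1 := by
    have : C1 = fun x => a1 * Real.cosh ((x - x01) / a1) + y01 := funext hC1
    rw [this]; continuity
  have hcontC2 : Continuous C2 := by
    have : C2 = fun x => a2 * Real.cosh ((x - x02) / a2) + y02 := funext hC2
    rw [this]; continuity
  have hcontg : Continuous (fun x => s x / c x) :=
    hconts.div hcontc (fun x => (hcpos x).ne')
  -- rewrite derivatives in integrands
  have hdC1 : ∀ x, deriv C1 x = s x := fun x => (hd1 x).deriv
  have hdC2 : ∀ x, deriv C2 x = s2 x := fun x => (hd2 x).deriv
  have hsq1 : ∀ x, Real.sqrt (1 + deriv C1 x ^ 2) = c x := by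
    intro x
    rw [hdC1]
    have : 1 + s x ^ 2 = c x ^ 2 := by
      simp only [hs, hc]; rw [Real.cosh_sq]; ring
    rw [this, Real.sqrt_sq (hcpos x).le]
  -- derivative of g = s/c
  have hdg : ∀ x, HasDerivAt (fun x => s x / c x) (1 / (a1 * c x ^ 2)) x := by
    intro x
    have ht : HasDerivAt (fun x : ℝ => (x - x01) / a1) (1 / a1) x := by
      simpa using ((hasDerivAt_id x).sub_const x01).div_const a1
    have hds : HasDerivAt s (c x * (1 / a1)) x := ht.sinh
    have hdc : HasDerivAt c (s x * (1 / a1)) x := ht.cosh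
    have hres := hds.div hdc (hcpos x).ne'
    have hid : c x ^ 2 - s x ^ 2 = 1 := by
      simp only [hs, hc]; exact Real.cosh_sq_sub_sinh_sq _
    have h1 : c x * (1 / a1) * c x - s x * (s x * (1 / a1)) = 1 / a1 := by
      field_simp
      linear_combination hid
    rw [h1, div_div] at hres
    exact hres
  -- integration by parts
  have hvd : ∀ x, HasDerivAt (fun x => C2 x - C1 x) (s2 x - s x) x :=
    fun x => (hd2 x).sub (hd1 x)
  have hibp :
      (∫ x in xA..xB, (s x / c x) * (s2 x - s x)) =
        (s xB / c xB) * (C2 xB - C1 xB) - (s xA / c xA) * (C2 xA - C1 xA) -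
          ∫ x in xA..xB, (1 / (a1 * c x ^ 2)) * (C2 x - C1 x) := by
    apply intervalIntegral.integral_mul_deriv_eq_deriv_mul
    · exact fun x _ => hdg x
    · exact fun x _ => hvd x
    · exact (Continuous.intervalIntegrable (by
        exact continuous_const.div ((continuous_const.mul (hcontc.pow 2))) (by
          intro x; positivity)) _ _)
    · exact ((hconts2.sub hconts).intervalIntegrable _ _)
  have hbd0 : C2 xB - C1 xB = 0 := by rw [hB2, hB1]; ring
  have hbd0' : C2 xA - C1 xA = 0 := by rw [hA2, hA1]; ring
  rw [hbd0, hbd0'] at hibp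
  simp only [mul_zero, zero_sub, sub_zero] at hibp
  -- positivity of the IBP remainder
  have hpos : 0 < ∫ x in xA..xB, (1 / (a1 * c x ^ 2)) * (C1 x - C2 x) := by
    apply intervalIntegral.intervalIntegral_pos_of_pos_on
    · exact (Continuous.intervalIntegrable (by
        exact (continuous_const.div (continuous_const.mul (hcontc.pow 2)) (by
          intro x; exact (mul_pos ha1 (pow_pos (hcpos x) 2)).ne')).mul (hcontC1.sub hcontC2)) _ _)
    · intro x hxm
      have h1 : 0 < 1 / (a1 * c x ^ 2) := by positivity
      have h2 : 0 < C1 x - C2 x := sub_pos.mpr (hgt x hxm)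
      positivity
    · exact hx
  have hibp2 : (∫ x in xA..xB, (s x / c x) * (s2 x - s x)) =
      ∫ x in xA..xB, (1 / (a1 * c x ^ 2)) * (C1 x - C2 x) := by
    rw [hibp]
    rw [← intervalIntegral.integral_neg]
    congr 1; funext x; ring
  -- pointwise bound: c x + g x * (s2 x - s x) ≤ sqrt (1 + s2 x ^ 2)
  have hptw : ∀ x, c x + (s x / c x) * (s2 x - s x) ≤ Real.sqrt (1 + s2 x ^ 2) := by
    intro x
    have hkey := aux_catkey (s2 x) ((x - x01) / a1)
    have hcx := hcpos x
    have hid : c x ^ 2 - s x ^ 2 = 1 := by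
      simp only [hs, hc]; exact Real.cosh_sq_sub_sinh_sq _
    have heq : c x + (s x / c x) * (s2 x - s x) = (1 + s2 x * s x) / c x := by
      rw [div_mul_eq_mul_div, eq_div_iff (hcpos x).ne', add_mul,
        div_mul_cancel₀ _ (hcpos x).ne']
      linear_combination hid
    rw [heq, div_le_iff₀ hcx]
    exact hkey
  -- assemble
  simp_rw [hsq1, hdC2]
  have hmono : (∫ x in xA..xB, (c x + (s x / c x) * (s2 x - s x))) ≤
      ∫ x in xA..xB, Real.sqrt (1 + s2 x ^ 2) := by
    apply intervalIntegral.integral_mono_on hx.le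
    · exact ((hcontc.add (hcontg.mul (hconts2.sub hconts))).intervalIntegrable _ _)
    · exact (Continuous.intervalIntegrable (by
        apply Real.continuous_sqrt.comp
        exact continuous_const.add (hconts2.pow 2)) _ _)
    · exact fun x _ => hptw x
  have hsplit : (∫ x in xA..xB, (c x + (s x / c x) * (s2 x - s x))) =
      (∫ x in xA..xB, c x) + ∫ x in xA..xB, (s x / c x) * (s2 x - s x) := by
    apply intervalIntegral.integral_add
    · exact hcontc.intervalIntegrable _ _
    · exact ((hcontg.mul (hconts2.sub hconts)).intervalIntegrable _ _)
  calc (∫ x in xA..xB, c x)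
      < (∫ x in xA..xB, c x) + ∫ x in xA..xB, (1 / (a1 * c x ^ 2)) * (C1 x - C2 x) := by
        linarith
    _ = ∫ x in xA..xB, (c x + (s x / c x) * (s2 x - s x)) := by rw [hsplit, hibp2]
    _ ≤ _ := hmono
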